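/- arXiv:1403.5961 — 2 statements merged into one kernel-verified Lean document; each statement's English description precedes it below -/
import Mathlib

section
/- Let G be a (finite simple) graph. If G contains an induced P3 and an induced K3, then G contains an induced subgraph isomorphic to P3 ∪ K3, to the diamond, or to the paw. -/
open SimpleGraph

/-- The disjoint union `G ∪ H` of two vertex-disjoint graphs. -/
def gUnion {α β : Type*} (G : SimpleGraph α) (H : SimpleGraph β) : SimpleGraph (α ⊕ β) where
  Adj x y :=
    match x, y with
    | Sum.inl a, Sum.inl b => G.Adj a b
    | Sum.inr a, Sum.inr b => H.Adj a b
    | _, _ => False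
  symm := by refine ⟨?_⟩; rintro (a | a) (b | b) h
             · exact G.adj_symm h
             · exact h.elim
             · exact h.elim
             · exact H.adj_symm h
  loopless := by refine ⟨?_⟩; rintro (a | a) h
                 · exact G.irrefl h
                 · exact H.irrefl h

/-- The join `G ⊕ H` of two vertex-disjoint graphs: disjoint union plus all edges across. -/
def gJoin {α β : Type*} (G : SimpleGraph α) (H : SimpleGraph β) : SimpleGraph (α ⊕ β) where
  Adj x y :=
    match x, y with
    | Sum.inl a, Sum.inl b => G.Adj a b
    | Sum.inr a, Sum.inr b => H.Adj a b
    | _, _ => True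
  symm := by refine ⟨?_⟩; rintro (a | a) (b | b) h
             · exact G.adj_symm h
             · trivial
             · trivial
             · exact H.adj_symm h
  loopless := by refine ⟨?_⟩; rintro (a | a) h
                 · exact G.irrefl h
                 · exact H.irrefl h

/-- The complete graph `Kₙ`. -/
def KG (n : ℕ) : SimpleGraph (Fin n) := ⊤

/-- The edgeless graph `nK₁` on `n` vertices. -/
def EG (n : ℕ) : SimpleGraph (Fin n) := ⊥

/-- `G` contains `H`, i.e. `H` is isomorphic to an induced subgraph of `G`. -/
def Contains {α β : Type*} (G : SimpleGraph α) (H : SimpleGraph β) : Prop :=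
  Nonempty (H ↪g G)

/-- A cograph is a `P₄`-free graph. -/
def IsCograph {α : Type*} (G : SimpleGraph α) : Prop :=
  ¬ Contains G (pathGraph 4)

/-- `G` is partitionable: its vertex set splits into a part inducing a triangle-free
graph and a part inducing a `P₃`-free graph. -/
def Partitionable {α : Type*} (G : SimpleGraph α) : Prop :=
  ∃ A : Set α, (G.induce A).CliqueFree 3 ∧ ¬ Contains (G.induce Aᶜ) (pathGraph 3)

/-- `G` is monopolar: its vertex set splits into an independent set and a part
inducing a `P₃`-free graph. -/
def Monopolar {α : Type*} (G : SimpleGraph α) : Prop :=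
  ∃ A : Set α, (G.induce A).CliqueFree 2 ∧ ¬ Contains (G.induce Aᶜ) (pathGraph 3)

/-- `G` is (1,2)-partitionable: its vertex set can be partitioned into at most one
clique and at most two independent sets (equivalently, covered by them). -/
def OneTwoPartitionable {α : Type*} (G : SimpleGraph α) : Prop :=
  ∃ C S₁ S₂ : Set α, C ∪ S₁ ∪ S₂ = Set.univ ∧ G.IsClique C ∧
    (G.induce S₁).CliqueFree 2 ∧ (G.induce S₂).CliqueFree 2

/-- A threshold graph is a `(2K₂, C₄, P₄)`-free graph. -/
def IsThreshold {α : Type*} (G : SimpleGraph α) : Prop :=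
  ¬ Contains G (gUnion (KG 2) (KG 2)) ∧ ¬ Contains G (cycleGraph 4) ∧
    ¬ Contains G (pathGraph 4)

/-- The diamond `K₂ ⊕ 2K₁`. -/
def diamond := gJoin (KG 2) (EG 2)

/-- The paw `K₁ ⊕ (K₁ ∪ K₂)`. -/
def paw := gJoin (KG 1) (gUnion (KG 1) (KG 2))

/-- The butterfly `K₁ ⊕ 2K₂`. -/
def butterfly := gJoin (KG 1) (gUnion (KG 2) (KG 2))

def twoK2 := gUnion (KG 2) (KG 2)

def twoK3 := gUnion (KG 3) (KG 3)

def K2uK1 := gUnion (KG 2) (KG 1)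



section Aux

variable {α : Type*} {G : SimpleGraph α}

set_option maxHeartbeats 800000 in
lemma embed_diamond (a b u v : α)
    (hab : G.Adj a b) (hua : G.Adj u a) (hub : G.Adj u b)
    (hva : G.Adj v a) (hvb : G.Adj v b) (huv : ¬ G.Adj u v) (hne : u ≠ v) :
    Contains G diamond := by
  have h1 := hab.ne; have h2 := hua.ne; have h3 := hub.ne
  have h4 := hva.ne; have h5 := hvb.ne
  have s1 := hab.symm; have s2 := hua.symm; have s3 := hub.symm
  have s4 := hva.symm; have s5 := hvb.symm
  have s6 : ¬ G.Adj v u := fun h => huv h.symm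
  refine ⟨⟨⟨Sum.elim ![a, b] ![u, v], ?_⟩, ?_⟩⟩
  · rintro (i | i) (j | j) h <;> fin_cases i <;> fin_cases j <;> simp_all
  · intro i j; change G.Adj (Sum.elim ![a, b] ![u, v] i) (Sum.elim ![a, b] ![u, v] j) ↔ _
    revert i j
    rintro (i | i) (j | j) <;> fin_cases i <;> fin_cases j <;>
      simp_all [diamond, gJoin, KG, EG]

set_option maxHeartbeats 800000 in
lemma embed_paw (a b c u : α)
    (hab : G.Adj a b) (hac : G.Adj a c) (hbc : G.Adj b c) (hua : G.Adj u a)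
    (hub : ¬ G.Adj u b) (huc : ¬ G.Adj u c) (hb : u ≠ b) (hc : u ≠ c) :
    Contains G paw := by
  have h1 := hab.ne; have h2 := hac.ne; have h3 := hbc.ne; have h4 := hua.ne
  have s1 := hab.symm; have s2 := hac.symm; have s3 := hbc.symm; have s4 := hua.symm
  have s5 : ¬ G.Adj b u := fun h => hub h.symm
  have s6 : ¬ G.Adj c u := fun h => huc h.symm
  refine ⟨⟨⟨Sum.elim ![a] (Sum.elim ![u] ![b, c]), ?_⟩, ?_⟩⟩
  · rintro (i | (i | i)) (j | (j | j)) h <;> fin_cases i <;> fin_cases j <;> simp_all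
  · intro i j
    change G.Adj (Sum.elim ![a] (Sum.elim ![u] ![b, c]) i)
      (Sum.elim ![a] (Sum.elim ![u] ![b, c]) j) ↔ _
    revert i j
    rintro (i | (i | i)) (j | (j | j)) <;> fin_cases i <;> fin_cases j <;>
      simp_all [paw, gJoin, gUnion, KG]

set_option maxHeartbeats 1600000 in
lemma embed_P3K3 (x y z a b c : α)
    (hxy : G.Adj x y) (hyz : G.Adj y z) (hxz : ¬ G.Adj x z) (hxzne : x ≠ z)
    (hab : G.Adj a b) (hac : G.Adj a c) (hbc : G.Adj b c)
    (hxa : ¬ G.Adj x a) (hxb : ¬ G.Adj x b) (hxc : ¬ G.Adj x c)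
    (hya : ¬ G.Adj y a) (hyb : ¬ G.Adj y b) (hyc : ¬ G.Adj y c)
    (hza : ¬ G.Adj z a) (hzb : ¬ G.Adj z b) (hzc : ¬ G.Adj z c)
    (nxa : x ≠ a) (nxb : x ≠ b) (nxc : x ≠ c)
    (nya : y ≠ a) (nyb : y ≠ b) (nyc : y ≠ c)
    (nza : z ≠ a) (nzb : z ≠ b) (nzc : z ≠ c) :
    Contains G (gUnion (pathGraph 3) (KG 3)) := by
  have h1 := hxy.ne; have h2 := hyz.ne
  have h3 := hab.ne; have h4 := hac.ne; have h5 := hbc.ne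
  have s1 := hxy.symm; have s2 := hyz.symm
  have s3 := hab.symm; have s4 := hac.symm; have s5 := hbc.symm
  have t1 : ¬ G.Adj z x := fun h => hxz h.symm
  have t2 : ¬ G.Adj a x := fun h => hxa h.symm
  have t3 : ¬ G.Adj b x := fun h => hxb h.symm
  have t4 : ¬ G.Adj c x := fun h => hxc h.symm
  have t5 : ¬ G.Adj a y := fun h => hya h.symm
  have t6 : ¬ G.Adj b y := fun h => hyb h.symm
  have t7 : ¬ G.Adj c y := fun h => hyc h.symm
  have t8 : ¬ G.Adj a z := fun h => hza h.symm
  have t9 : ¬ G.Adj b z := fun h => hzb h.symm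
  have t10 : ¬ G.Adj c z := fun h => hzc h.symm
  refine ⟨⟨⟨Sum.elim ![x, y, z] ![a, b, c], ?_⟩, ?_⟩⟩
  · rintro (i | i) (j | j) h <;> fin_cases i <;> fin_cases j <;> simp_all
  · intro i j
    change G.Adj (Sum.elim ![x, y, z] ![a, b, c] i) (Sum.elim ![x, y, z] ![a, b, c] j) ↔ _
    revert i j
    rintro (i | i) (j | j) <;> fin_cases i <;> fin_cases j <;>
      simp_all [gUnion, KG, pathGraph_adj]

lemma key (hd : ¬ Contains G diamond) (hp : ¬ Contains G paw) {a b c u : α}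
    (hab : G.Adj a b) (hac : G.Adj a c) (hbc : G.Adj b c)
    (hua : G.Adj u a) (hb : u ≠ b) (hc : u ≠ c) :
    G.Adj u b ∧ G.Adj u c := by
  by_cases h1 : G.Adj u b <;> by_cases h2 : G.Adj u c
  · exact ⟨h1, h2⟩
  · exact absurd (embed_diamond a b u c hab hua h1 hac.symm hbc.symm h2 hc) hd
  · exact absurd (embed_diamond a c u b hac hua h2 hab.symm hbc h1 hb) hd
  · exact absurd (embed_paw a b c u hab hac hbc hua h1 h2 hb hc) hp

lemma spread (hd : ¬ Contains G diamond) (hp : ¬ Contains G paw) {a b c w v : α}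
    (hab : G.Adj a b) (hac : G.Adj a c) (hbc : G.Adj b c)
    (hw : w = a ∨ w = b ∨ w = c ∨ (G.Adj w a ∧ G.Adj w b ∧ G.Adj w c))
    (hv : G.Adj v w) :
    v = a ∨ v = b ∨ v = c ∨ (G.Adj v a ∧ G.Adj v b ∧ G.Adj v c) := by
  by_cases ha' : v = a
  · exact Or.inl ha'
  by_cases hb' : v = b
  · exact Or.inr (Or.inl hb')
  by_cases hc' : v = c
  · exact Or.inr (Or.inr (Or.inl hc'))
  refine Or.inr (Or.inr (Or.inr ?_))
  rcases hw with rfl | rfl | rfl | ⟨hwa, hwb, hwc⟩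
  · obtain ⟨h1, h2⟩ := key hd hp hab hac hbc hv hb' hc'
    exact ⟨hv, h1, h2⟩
  · obtain ⟨h1, h2⟩ := key hd hp hab.symm hbc hac hv ha' hc'
    exact ⟨h1, hv, h2⟩
  · obtain ⟨h1, h2⟩ := key hd hp hac.symm hbc.symm hab hv ha' hb'
    exact ⟨h1, h2, hv⟩
  · obtain ⟨h1, h2⟩ := key hd hp hwa hwb hab hv ha' hb'
    obtain ⟨_, h3⟩ := key hd hp hwa hwc hac hv ha' hc'
    exact ⟨h1, h2, h3⟩

lemma detach (hd : ¬ Contains G diamond) (hp : ¬ Contains G paw) {a b c w : α}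
    (hab : G.Adj a b) (hac : G.Adj a c) (hbc : G.Adj b c)
    (hw : ¬ (w = a ∨ w = b ∨ w = c ∨ (G.Adj w a ∧ G.Adj w b ∧ G.Adj w c))) :
    w ≠ a ∧ w ≠ b ∧ w ≠ c ∧ ¬ G.Adj w a ∧ ¬ G.Adj w b ∧ ¬ G.Adj w c := by
  push_neg at hw
  obtain ⟨n1, n2, n3, n4⟩ := hw
  refine ⟨n1, n2, n3, ?_, ?_, ?_⟩
  · intro h
    obtain ⟨h1, h2⟩ := key hd hp hab hac hbc h n2 n3
    exact (n4 h h1).elim h2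
  · intro h
    obtain ⟨h1, h2⟩ := key hd hp hab.symm hbc hac h n1 n3
    exact (n4 h1 h).elim h2
  · intro h
    obtain ⟨h1, h2⟩ := key hd hp hac.symm hbc.symm hab h n1 n2
    exact (n4 h1 h2).elim h
end Aux


theorem stmt_0 {α : Type*} [Fintype α] (G : SimpleGraph α)
    (hP3 : Contains G (pathGraph 3)) (hK3 : Contains G (KG 3)) :
    Contains G (gUnion (pathGraph 3) (KG 3)) ∨ Contains G diamond ∨ Contains G paw := by
  by_contra hcon
  push_neg at hcon
  obtain ⟨hn, hd, hp⟩ := hcon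
  obtain ⟨p⟩ := hP3
  obtain ⟨f⟩ := hK3
  set x := p 0 with hx
  set y := p 1 with hy
  set z := p 2 with hz
  set a := f 0 with ha
  set b := f 1 with hb
  set c := f 2 with hc
  have hxy : G.Adj x y := p.map_rel_iff.mpr (by simp [pathGraph_adj])
  have hyz : G.Adj y z := p.map_rel_iff.mpr (by simp [pathGraph_adj])
  have hxz : ¬ G.Adj x z := fun h => by
    have := p.map_rel_iff.mp h
    simp [pathGraph_adj] at this
  have hxzne : x ≠ z := fun h => by
    have := p.injective h
    simp at this
  have hab : G.Adj a b := f.map_rel_iff.mpr (by simp [KG])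
  have hac : G.Adj a c := f.map_rel_iff.mpr (by simp [KG])
  have hbc : G.Adj b c := f.map_rel_iff.mpr (by simp [KG])
  have hyAtt : ¬ (y = a ∨ y = b ∨ y = c ∨ (G.Adj y a ∧ G.Adj y b ∧ G.Adj y c)) := by
    intro hAy
    have hAx := spread hd hp hab hac hbc hAy hxy
    have hAz := spread hd hp hab hac hbc hAy hyz.symm
    rcases hAx with h | h | h | ⟨xa, xb, xc⟩ <;>
      rcases hAz with h' | h' | h' | ⟨za, zb, zc⟩
    · exact hxzne (h.trans h'.symm)
    · exact hxz (by rw [h, h']; exact hab)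
    · exact hxz (by rw [h, h']; exact hac)
    · exact hxz (by rw [h]; exact za.symm)
    · exact hxz (by rw [h, h']; exact hab.symm)
    · exact hxzne (h.trans h'.symm)
    · exact hxz (by rw [h, h']; exact hbc)
    · exact hxz (by rw [h]; exact zb.symm)
    · exact hxz (by rw [h, h']; exact hac.symm)
    · exact hxz (by rw [h, h']; exact hbc.symm)
    · exact hxzne (h.trans h'.symm)
    · exact hxz (by rw [h]; exact zc.symm)
    · exact hxz (by rw [h']; exact xa)
    · exact hxz (by rw [h']; exact xb)
    · exact hxz (by rw [h']; exact xc)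
    · obtain ⟨_, h2⟩ := key hd hp hab xa.symm xb.symm za zb.ne (Ne.symm hxzne)
      exact hxz h2.symm
  have hxAtt : ¬ (x = a ∨ x = b ∨ x = c ∨ (G.Adj x a ∧ G.Adj x b ∧ G.Adj x c)) :=
    fun h => hyAtt (spread hd hp hab hac hbc h hxy.symm)
  have hzAtt : ¬ (z = a ∨ z = b ∨ z = c ∨ (G.Adj z a ∧ G.Adj z b ∧ G.Adj z c)) :=
    fun h => hyAtt (spread hd hp hab hac hbc h hyz)
  obtain ⟨nxa, nxb, nxc, exa, exb, exc⟩ := detach hd hp hab hac hbc hxAtt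
  obtain ⟨nya, nyb, nyc, eya, eyb, eyc⟩ := detach hd hp hab hac hbc hyAtt
  obtain ⟨nza, nzb, nzc, eza, ezb, ezc⟩ := detach hd hp hab hac hbc hzAtt
  exact hn (embed_P3K3 x y z a b c hxy hyz hxz hxzne hab hac hbc
    exa exb exc eya eyb eyc eza ezb ezc nxa nxb nxc nya nyb nyc nza nzb nzc)
end

section
/- Let G be a cograph with no induced C4. If G contains an induced P3, an induced 2K2 and an induced K3, then G contains an induced subgraph isomorphic to P3 ∪ K3, to the butterfly, to K2 ∪ paw, or to K2 ∪ diamond. -/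
open SimpleGraph

section Aux
open Sum
variable {α β : Type*} {G : SimpleGraph α} {H : SimpleGraph β}

@[simp] lemma gUnion_adj_ll {a b} : (gUnion G H).Adj (inl a) (inl b) ↔ G.Adj a b := Iff.rfl
@[simp] lemma gUnion_adj_lr {a : α} {b : β} : ¬ (gUnion G H).Adj (inl a) (inr b) := fun h => h
@[simp] lemma gUnion_adj_rl {a : β} {b : α} : ¬ (gUnion G H).Adj (inr a) (inl b) := fun h => h
@[simp] lemma gUnion_adj_rr {a b} : (gUnion G H).Adj (inr a) (inr b) ↔ H.Adj a b := Iff.rfl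
@[simp] lemma gJoin_adj_ll {a b} : (gJoin G H).Adj (inl a) (inl b) ↔ G.Adj a b := Iff.rfl
@[simp] lemma gJoin_adj_lr {a : α} {b : β} : (gJoin G H).Adj (inl a) (inr b) := trivial
@[simp] lemma gJoin_adj_rl {a : β} {b : α} : (gJoin G H).Adj (inr a) (inl b) := trivial
@[simp] lemma gJoin_adj_rr {a b} : (gJoin G H).Adj (inr a) (inr b) ↔ H.Adj a b := Iff.rfl
@[simp] lemma KG_adj {n} {a b : Fin n} : (KG n).Adj a b ↔ a ≠ b := Iff.rfl
@[simp] lemma EG_adj {n} {a b : Fin n} : ¬ (EG n).Adj a b := fun h => h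

lemma contains_of (f : β → α) (hinj : Function.Injective f)
    (hadj : ∀ a b, G.Adj (f a) (f b) ↔ H.Adj a b) : Contains G H :=
  ⟨⟨⟨f, hinj⟩, hadj _ _⟩⟩

lemma contains_P4_of {p q r s : α}
    (h1 : G.Adj p q) (h2 : G.Adj q r) (h3 : G.Adj r s)
    (n1 : ¬G.Adj p r) (n2 : ¬G.Adj p s) (n3 : ¬G.Adj q s)
    (d1 : p ≠ r) (d2 : p ≠ s) (d3 : q ≠ s) :
    Contains G (pathGraph 4) := by
  have e1 := h1.ne; have e2 := h2.ne; have e3 := h3.ne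
  have s1 := h1.symm; have s2 := h2.symm; have s3 := h3.symm
  have m1 : ¬G.Adj r p := fun h => n1 h.symm
  have m2 : ¬G.Adj s p := fun h => n2 h.symm
  have m3 : ¬G.Adj s q := fun h => n3 h.symm
  apply contains_of ![p, q, r, s]
  · intro i j hij
    fin_cases i <;> fin_cases j <;> simp_all
  · intro i j
    fin_cases i <;> fin_cases j <;>
      simp_all [pathGraph_adj, SimpleGraph.irrefl] <;> decide

lemma contains_P3K3_of {u v w x y z : α}
    (huv : G.Adj u v) (hvw : G.Adj v w) (huw : ¬G.Adj u w) (huwne : u ≠ w)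
    (hxy : G.Adj x y) (hxz : G.Adj x z) (hyz : G.Adj y z)
    (nux : ¬G.Adj u x) (nuy : ¬G.Adj u y) (nuz : ¬G.Adj u z)
    (nvx : ¬G.Adj v x) (nvy : ¬G.Adj v y) (nvz : ¬G.Adj v z)
    (nwx : ¬G.Adj w x) (nwy : ¬G.Adj w y) (nwz : ¬G.Adj w z)
    (dux : u ≠ x) (duy : u ≠ y) (duz : u ≠ z)
    (dvx : v ≠ x) (dvy : v ≠ y) (dvz : v ≠ z)
    (dwx : w ≠ x) (dwy : w ≠ y) (dwz : w ≠ z) :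
    Contains G (gUnion (pathGraph 3) (KG 3)) := by
  have e1 := huv.ne; have e2 := hvw.ne; have e3 := hxy.ne
  have e4 := hxz.ne; have e5 := hyz.ne
  have s1 := huv.symm; have s2 := hvw.symm; have s3 := hxy.symm
  have s4 := hxz.symm; have s5 := hyz.symm
  have m0 : ¬G.Adj w u := fun h => huw h.symm
  have m1 : ¬G.Adj x u := fun h => nux h.symm
  have m2 : ¬G.Adj y u := fun h => nuy h.symm
  have m3 : ¬G.Adj z u := fun h => nuz h.symm
  have m4 : ¬G.Adj x v := fun h => nvx h.symm
  have m5 : ¬G.Adj y v := fun h => nvy h.symm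
  have m6 : ¬G.Adj z v := fun h => nvz h.symm
  have m7 : ¬G.Adj x w := fun h => nwx h.symm
  have m8 : ¬G.Adj y w := fun h => nwy h.symm
  have m9 : ¬G.Adj z w := fun h => nwz h.symm
  apply contains_of (Sum.elim ![u, v, w] ![x, y, z])
  · rintro (i | i) (j | j) hij <;> fin_cases i <;> fin_cases j <;> simp_all
  · rintro (i | i) (j | j) <;> fin_cases i <;> fin_cases j <;>
      simp_all [pathGraph_adj, SimpleGraph.irrefl] <;> decide

lemma contains_butterfly_of {e a b c d : α}
    (hea : G.Adj e a) (heb : G.Adj e b) (hec : G.Adj e c) (hed : G.Adj e d)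
    (hab : G.Adj a b) (hcd : G.Adj c d)
    (nac : ¬G.Adj a c) (nad : ¬G.Adj a d) (nbc : ¬G.Adj b c) (nbd : ¬G.Adj b d)
    (dac : a ≠ c) (dad : a ≠ d) (dbc : b ≠ c) (dbd : b ≠ d) :
    Contains G butterfly := by
  have e1 := hea.ne; have e2 := heb.ne; have e3 := hec.ne; have e4 := hed.ne
  have e5 := hab.ne; have e6 := hcd.ne
  have s1 := hea.symm; have s2 := heb.symm; have s3 := hec.symm; have s4 := hed.symm
  have s5 := hab.symm; have s6 := hcd.symm
  have m1 : ¬G.Adj c a := fun h => nac h.symm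
  have m2 : ¬G.Adj d a := fun h => nad h.symm
  have m3 : ¬G.Adj c b := fun h => nbc h.symm
  have m4 : ¬G.Adj d b := fun h => nbd h.symm
  apply contains_of (Sum.elim (fun _ => e) (Sum.elim ![a, b] ![c, d]))
  · rintro (i | i | i) (j | j | j) hij <;> fin_cases i <;> fin_cases j <;> simp_all
  · rintro (i | i | i) (j | j | j) <;> fin_cases i <;> fin_cases j <;>
      simp_all [butterfly, SimpleGraph.irrefl] <;> decide

lemma contains_K2paw_of {p q h s m n : α}
    (hpq : G.Adj p q)
    (hhs : G.Adj h s) (hhm : G.Adj h m) (hhn : G.Adj h n) (hmn : G.Adj m n)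
    (nsm : ¬G.Adj s m) (nsn : ¬G.Adj s n)
    (nph : ¬G.Adj p h) (nps : ¬G.Adj p s) (npm : ¬G.Adj p m) (npn : ¬G.Adj p n)
    (nqh : ¬G.Adj q h) (nqs : ¬G.Adj q s) (nqm : ¬G.Adj q m) (nqn : ¬G.Adj q n)
    (dph : p ≠ h) (dps : p ≠ s) (dpm : p ≠ m) (dpn : p ≠ n)
    (dqh : q ≠ h) (dqs : q ≠ s) (dqm : q ≠ m) (dqn : q ≠ n) :
    Contains G (gUnion (KG 2) paw) := by
  have dsm : s ≠ m := fun hh => nsn (hh ▸ hmn)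
  have dsn : s ≠ n := fun hh => nsm (hh ▸ hmn.symm)
  have e1 := hpq.ne; have e2 := hhs.ne; have e3 := hhm.ne; have e4 := hhn.ne
  have e5 := hmn.ne
  have s1 := hpq.symm; have s2 := hhs.symm; have s3 := hhm.symm; have s4 := hhn.symm
  have s5 := hmn.symm
  have m1 : ¬G.Adj m s := fun hh => nsm hh.symm
  have m2 : ¬G.Adj n s := fun hh => nsn hh.symm
  have m3 : ¬G.Adj h p := fun hh => nph hh.symm
  have m4 : ¬G.Adj s p := fun hh => nps hh.symm
  have m5 : ¬G.Adj m p := fun hh => npm hh.symm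
  have m6 : ¬G.Adj n p := fun hh => npn hh.symm
  have m7 : ¬G.Adj h q := fun hh => nqh hh.symm
  have m8 : ¬G.Adj s q := fun hh => nqs hh.symm
  have m9 : ¬G.Adj m q := fun hh => nqm hh.symm
  have m10 : ¬G.Adj n q := fun hh => nqn hh.symm
  apply contains_of (Sum.elim ![p, q] (Sum.elim (fun _ => h) (Sum.elim (fun _ => s) ![m, n])))
  · rintro (i | i | i | i) (j | j | j | j) hij <;> fin_cases i <;> fin_cases j <;> simp_all
  · rintro (i | i | i | i) (j | j | j | j) <;> fin_cases i <;> fin_cases j <;>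
      simp_all [paw, SimpleGraph.irrefl] <;> decide

lemma contains_K2dia_of {p q a b s t : α}
    (hpq : G.Adj p q)
    (hab : G.Adj a b) (has : G.Adj a s) (hat : G.Adj a t)
    (hbs : G.Adj b s) (hbt : G.Adj b t) (nst : ¬G.Adj s t) (dst : s ≠ t)
    (npa : ¬G.Adj p a) (npb : ¬G.Adj p b) (nps : ¬G.Adj p s) (npt : ¬G.Adj p t)
    (nqa : ¬G.Adj q a) (nqb : ¬G.Adj q b) (nqs : ¬G.Adj q s) (nqt : ¬G.Adj q t)
    (dpa : p ≠ a) (dpb : p ≠ b) (dps : p ≠ s) (dpt : p ≠ t)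
    (dqa : q ≠ a) (dqb : q ≠ b) (dqs : q ≠ s) (dqt : q ≠ t) :
    Contains G (gUnion (KG 2) diamond) := by
  have e1 := hpq.ne; have e2 := hab.ne; have e3 := has.ne; have e4 := hat.ne
  have e5 := hbs.ne; have e6 := hbt.ne
  have s1 := hpq.symm; have s2 := hab.symm; have s3 := has.symm; have s4 := hat.symm
  have s5 := hbs.symm; have s6 := hbt.symm
  have m0 : ¬G.Adj t s := fun hh => nst hh.symm
  have m1 : ¬G.Adj a p := fun hh => npa hh.symm
  have m2 : ¬G.Adj b p := fun hh => npb hh.symm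
  have m3 : ¬G.Adj s p := fun hh => nps hh.symm
  have m4 : ¬G.Adj t p := fun hh => npt hh.symm
  have m5 : ¬G.Adj a q := fun hh => nqa hh.symm
  have m6 : ¬G.Adj b q := fun hh => nqb hh.symm
  have m7 : ¬G.Adj s q := fun hh => nqs hh.symm
  have m8 : ¬G.Adj t q := fun hh => nqt hh.symm
  apply contains_of (Sum.elim ![p, q] (Sum.elim ![a, b] ![s, t]))
  · rintro (i | i | i) (j | j | j) hij <;> fin_cases i <;> fin_cases j <;> simp_all
  · rintro (i | i | i) (j | j | j) <;> fin_cases i <;> fin_cases j <;>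
      simp_all [diamond, SimpleGraph.irrefl] <;> decide

end Aux

section Main
open Sum
variable {α : Type*} {G : SimpleGraph α}


lemma common_neighbor (hcog : IsCograph G) :
    ∀ {a c : α}, G.Walk a c → a ≠ c → ¬G.Adj a c → ∃ e, G.Adj a e ∧ G.Adj e c := by
  intro a c p
  induction p with
  | nil => exact fun h _ => absurd rfl h
  | @cons a b c hab q ih =>
    intro hne hnadj
    by_cases hbc : G.Adj b c
    · exact ⟨b, hab, hbc⟩
    by_cases hbceq : b = c
    · subst hbceq; exact absurd hab hnadj
    obtain ⟨f, hbf, hfc⟩ := ih hbceq hbc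
    by_cases haf : G.Adj a f
    · exact ⟨f, haf, hfc⟩
    exact absurd (contains_P4_of hab hbf hfc haf hnadj hbc
      (fun h => hnadj (by rw [h]; exact hfc)) hne hbceq) hcog

lemma butterfly_case (hcog : IsCograph G) {a b c d : α}
    (hab : G.Adj a b) (hcd : G.Adj c d) (nac : ¬G.Adj a c) (nad : ¬G.Adj a d)
    (nbc : ¬G.Adj b c) (nbd : ¬G.Adj b d) (hre : G.Reachable a c) :
    Contains G butterfly := by
  have dac : a ≠ c := fun h => nad (by rw [h]; exact hcd)
  have dad : a ≠ d := fun h => nac (by rw [h]; exact hcd.symm)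
  have dbc : b ≠ c := fun h => nbd (by rw [h]; exact hcd)
  have dbd : b ≠ d := fun h => nbc (by rw [h]; exact hcd.symm)
  obtain ⟨e, hae, hec⟩ := common_neighbor hcog hre.some dac nac
  have heb : G.Adj e b := by
    by_contra hbe
    exact absurd (contains_P4_of hab.symm hae hec (fun hh => hbe hh.symm) nbc nac
      (fun h => nbc (by rw [h]; exact hec)) dbc dac) hcog
  have hed : G.Adj e d := by
    by_contra hde
    exact absurd (contains_P4_of hae hec hcd nac nad hde
      dac dad (fun h => nad (h ▸ hae))) hcog
  exact contains_butterfly_of hae.symm heb hec hed hab hcd nac nad nbc nbd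
    dac dad dbc dbd

lemma sees
    (hPaw : ∀ h s m n : α, ¬(G.Adj h s ∧ G.Adj h m ∧ G.Adj h n ∧ G.Adj m n ∧
      ¬G.Adj s m ∧ ¬G.Adj s n))
    (hDia : ∀ h b s t : α, ¬(G.Adj h b ∧ G.Adj h s ∧ G.Adj h t ∧ G.Adj b s ∧
      G.Adj b t ∧ ¬G.Adj s t ∧ s ≠ t))
    {x y z : α} (hxy : G.Adj x y) (hxz : G.Adj x z) (hyz : G.Adj y z) (t : α) :
    t = x ∨ t = y ∨ t = z ∨ (G.Adj t x ∧ G.Adj t y ∧ G.Adj t z) ∨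
      (¬G.Adj t x ∧ ¬G.Adj t y ∧ ¬G.Adj t z) := by
  by_cases h1 : G.Adj t x <;> by_cases h2 : G.Adj t y <;> by_cases h3 : G.Adj t z
  · exact Or.inr (Or.inr (Or.inr (Or.inl ⟨h1, h2, h3⟩)))
  · by_cases htz : t = z
    · exact Or.inr (Or.inr (Or.inl htz))
    · exact (hDia x y t z ⟨hxy, h1.symm, hxz, h2.symm, hyz, h3, htz⟩).elim
  · by_cases hty : t = y
    · exact Or.inr (Or.inl hty)
    · exact (hDia x z t y ⟨hxz, h1.symm, hxy, h3.symm, hyz.symm, h2, hty⟩).elim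
  · exact (hPaw x t y z ⟨h1.symm, hxy, hxz, hyz, h2, h3⟩).elim
  · by_cases htx : t = x
    · exact Or.inl htx
    · exact (hDia y z t x ⟨hyz, h2.symm, hxy.symm, h3.symm, hxz.symm, h1, htx⟩).elim
  · exact (hPaw y t x z ⟨h2.symm, hxy.symm, hyz, hxz, h1, h3⟩).elim
  · exact (hPaw z t x y ⟨h3.symm, hxz.symm, hyz.symm, hxy, h1, h2⟩).elim
  · exact Or.inr (Or.inr (Or.inr (Or.inr ⟨h1, h2, h3⟩)))

lemma memCase
    (hPaw : ∀ h s m n : α, ¬(G.Adj h s ∧ G.Adj h m ∧ G.Adj h n ∧ G.Adj m n ∧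
      ¬G.Adj s m ∧ ¬G.Adj s n))
    (hDia : ∀ h b s t : α, ¬(G.Adj h b ∧ G.Adj h s ∧ G.Adj h t ∧ G.Adj b s ∧
      G.Adj b t ∧ ¬G.Adj s t ∧ s ≠ t))
    {x y z v w : α} (hxy : G.Adj x y) (hxz : G.Adj x z) (hyz : G.Adj y z)
    (hxv : G.Adj x v) (hvw : G.Adj v w) (hxw : ¬G.Adj x w) (hwx : w ≠ x) : False := by
  rcases sees hPaw hDia hxy hxz hyz w with h | h | h | hF | hZ
  · exact hwx h
  · exact hxw (by rw [h]; exact hxy)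
  · exact hxw (by rw [h]; exact hxz)
  · exact hxw hF.1.symm
  · rcases sees hPaw hDia hxy hxz hyz v with h | h | h | hF | hZ2
    · exact G.irrefl (by rw [h] at hxv; exact hxv)
    · exact hZ.2.1 (by rw [h] at hvw; exact hvw.symm)
    · exact hZ.2.2 (by rw [h] at hvw; exact hvw.symm)
    · exact hPaw v w y z ⟨hvw, hF.2.1, hF.2.2, hyz, hZ.2.1, hZ.2.2⟩
    · exact hZ2.1 hxv.symm

lemma lemM {u v w x y z : α}
    (huv : G.Adj u v) (hvw : G.Adj v w) (huw : ¬G.Adj u w) (huwne : u ≠ w)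
    (hxy : G.Adj x y) (hxz : G.Adj x z) (hyz : G.Adj y z) :
    (∃ h s m n : α, G.Adj h s ∧ G.Adj h m ∧ G.Adj h n ∧ G.Adj m n ∧
      ¬G.Adj s m ∧ ¬G.Adj s n) ∨
    (∃ h b s t : α, G.Adj h b ∧ G.Adj h s ∧ G.Adj h t ∧ G.Adj b s ∧
      G.Adj b t ∧ ¬G.Adj s t ∧ s ≠ t) ∨
    Contains G (gUnion (pathGraph 3) (KG 3)) := by
  by_contra hcon
  have hPaw : ∀ h s m n : α, ¬(G.Adj h s ∧ G.Adj h m ∧ G.Adj h n ∧ G.Adj m n ∧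
      ¬G.Adj s m ∧ ¬G.Adj s n) := fun h s m n hh => hcon (Or.inl ⟨h, s, m, n, hh⟩)
  have hDia : ∀ h b s t : α, ¬(G.Adj h b ∧ G.Adj h s ∧ G.Adj h t ∧ G.Adj b s ∧
      G.Adj b t ∧ ¬G.Adj s t ∧ s ≠ t) := fun h b s t hh => hcon (Or.inr (Or.inl ⟨h, b, s, t, hh⟩))
  have hP3K3 : ¬ Contains G (gUnion (pathGraph 3) (KG 3)) := fun hh => hcon (Or.inr (Or.inr hh))
  rcases sees hPaw hDia hxy hxz hyz u with h | h | h | hFu | hZu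
  · exact memCase hPaw hDia hxy hxz hyz (h ▸ huv) hvw (h ▸ huw)
      (fun e => huwne (h.trans e.symm))
  · exact memCase hPaw hDia hxy.symm hyz hxz (h ▸ huv) hvw (h ▸ huw)
      (fun e => huwne (h.trans e.symm))
  · exact memCase hPaw hDia hxz.symm hyz.symm hxy (h ▸ huv) hvw (h ▸ huw)
      (fun e => huwne (h.trans e.symm))
  all_goals rcases sees hPaw hDia hxy hxz hyz w with h | h | h | hFw | hZw
  -- hFu, w membership
  · exact memCase hPaw hDia hxy hxz hyz (h ▸ hvw.symm) huv.symm
      (fun hh => huw (h.symm ▸ hh.symm)) (fun e => huwne (e.trans h.symm))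
  · exact memCase hPaw hDia hxy.symm hyz hxz (h ▸ hvw.symm) huv.symm
      (fun hh => huw (h.symm ▸ hh.symm)) (fun e => huwne (e.trans h.symm))
  · exact memCase hPaw hDia hxz.symm hyz.symm hxy (h ▸ hvw.symm) huv.symm
      (fun hh => huw (h.symm ▸ hh.symm)) (fun e => huwne (e.trans h.symm))
  -- hFu, hFw
  · exact hDia x y u w ⟨hxy, hFu.1.symm, hFw.1.symm, hFu.2.1.symm, hFw.2.1.symm, huw, huwne⟩
  -- hFu, hZw
  · rcases sees hPaw hDia hxy hxz hyz v with h | h | h | hFv | hZv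
    · exact hZw.1 ((h ▸ hvw).symm)
    · exact hZw.2.1 ((h ▸ hvw).symm)
    · exact hZw.2.2 ((h ▸ hvw).symm)
    · exact hPaw v w x y ⟨hvw, hFv.1, hFv.2.1, hxy, hZw.1, hZw.2.1⟩
    · exact hPaw u v x y ⟨huv, hFu.1, hFu.2.1, hxy, hZv.1, hZv.2.1⟩
  -- hZu, w membership
  · exact memCase hPaw hDia hxy hxz hyz (h ▸ hvw.symm) huv.symm
      (fun hh => huw (h.symm ▸ hh.symm)) (fun e => huwne (e.trans h.symm))
  · exact memCase hPaw hDia hxy.symm hyz hxz (h ▸ hvw.symm) huv.symm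
      (fun hh => huw (h.symm ▸ hh.symm)) (fun e => huwne (e.trans h.symm))
  · exact memCase hPaw hDia hxz.symm hyz.symm hxy (h ▸ hvw.symm) huv.symm
      (fun hh => huw (h.symm ▸ hh.symm)) (fun e => huwne (e.trans h.symm))
  -- hZu, hFw
  · rcases sees hPaw hDia hxy hxz hyz v with h | h | h | hFv | hZv
    · exact hZu.1 (h ▸ huv)
    · exact hZu.2.1 (h ▸ huv)
    · exact hZu.2.2 (h ▸ huv)
    · exact hPaw v u x y ⟨huv.symm, hFv.1, hFv.2.1, hxy, hZu.1, hZu.2.1⟩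
    · exact hPaw w v x y ⟨hvw.symm, hFw.1, hFw.2.1, hxy, hZv.1, hZv.2.1⟩
  -- hZu, hZw
  · rcases sees hPaw hDia hxy hxz hyz v with h | h | h | hFv | hZv
    · exact hZu.1 (h ▸ huv)
    · exact hZu.2.1 (h ▸ huv)
    · exact hZu.2.2 (h ▸ huv)
    · exact hPaw v u x y ⟨huv.symm, hFv.1, hFv.2.1, hxy, hZu.1, hZu.2.1⟩
    · exact hP3K3 (contains_P3K3_of huv hvw huw huwne hxy hxz hyz
        hZu.1 hZu.2.1 hZu.2.2 hZv.1 hZv.2.1 hZv.2.2 hZw.1 hZw.2.1 hZw.2.2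
        (fun h => hZu.2.1 (by rw [h]; exact hxy))
        (fun h => hZu.1 (by rw [h]; exact hxy.symm))
        (fun h => hZu.1 (by rw [h]; exact hxz.symm))
        (fun h => hZv.2.1 (by rw [h]; exact hxy))
        (fun h => hZv.1 (by rw [h]; exact hxy.symm))
        (fun h => hZv.1 (by rw [h]; exact hxz.symm))
        (fun h => hZw.2.1 (by rw [h]; exact hxy))
        (fun h => hZw.1 (by rw [h]; exact hxy.symm))
        (fun h => hZw.1 (by rw [h]; exact hxz.symm)))

lemma far_edge {a b c d : α} (hre : ¬G.Reachable a c) (hab : G.Adj a b) (hcd : G.Adj c d)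
    (h : α) :
    ∃ p q, G.Adj p q ∧ ∀ t', G.Reachable h t' →
      ¬G.Adj p t' ∧ ¬G.Adj q t' ∧ p ≠ t' ∧ q ≠ t' := by
  have main : ∃ p q, G.Adj p q ∧ ¬G.Reachable p h ∧ ¬G.Reachable q h := by
    by_cases hra : G.Reachable a h
    · exact ⟨c, d, hcd, fun hr => hre (hra.trans hr.symm),
        fun hr => hre (hra.trans (hcd.reachable.trans hr).symm)⟩
    · exact ⟨a, b, hab, hra, fun hr => hra (hab.reachable.trans hr)⟩
  obtain ⟨p, q, hpq, hp, hq⟩ := main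
  refine ⟨p, q, hpq, fun t' ht' => ⟨fun hh => hp (hh.reachable.trans ht'.symm),
    fun hh => hq (hh.reachable.trans ht'.symm),
    fun e => hp (by rw [e]; exact ht'.symm), fun e => hq (by rw [e]; exact ht'.symm)⟩⟩

end Main

theorem stmt_2 {α : Type*} [Fintype α] (G : SimpleGraph α) (hcog : IsCograph G)
    (hC4 : ¬ Contains G (cycleGraph 4))
    (hP3 : Contains G (pathGraph 3)) (h2K2 : Contains G twoK2) (hK3 : Contains G (KG 3)) :
    Contains G (gUnion (pathGraph 3) (KG 3)) ∨ Contains G butterfly ∨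
      Contains G (gUnion (KG 2) paw) ∨ Contains G (gUnion (KG 2) diamond) := by
  
  obtain ⟨fP⟩ := hP3
  obtain ⟨fD⟩ := h2K2
  obtain ⟨fT⟩ := hK3
  -- P3 data
  have huv : G.Adj (fP 0) (fP 1) := fP.map_rel_iff.mpr (by simp [pathGraph_adj])
  have hvw : G.Adj (fP 1) (fP 2) := fP.map_rel_iff.mpr (by simp [pathGraph_adj])
  have huw : ¬ G.Adj (fP 0) (fP 2) := fun h => by
    have := fP.map_rel_iff.mp h
    simp [pathGraph_adj] at this
  have huwne : fP 0 ≠ fP 2 := fun h => absurd (fP.injective h) (by decide)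
  -- K3 data
  have hxy : G.Adj (fT 0) (fT 1) := fT.map_rel_iff.mpr (KG_adj.mpr (by decide))
  have hxz : G.Adj (fT 0) (fT 2) := fT.map_rel_iff.mpr (KG_adj.mpr (by decide))
  have hyz : G.Adj (fT 1) (fT 2) := fT.map_rel_iff.mpr (KG_adj.mpr (by decide))
  -- 2K2 data
  have hab : G.Adj (fD (Sum.inl 0)) (fD (Sum.inl 1)) := fD.map_rel_iff.mpr (by
    show twoK2.Adj _ _
    simp [twoK2])
  have hcd : G.Adj (fD (Sum.inr 0)) (fD (Sum.inr 1)) := fD.map_rel_iff.mpr (by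
    show twoK2.Adj _ _
    simp [twoK2])
  have nac : ¬ G.Adj (fD (Sum.inl 0)) (fD (Sum.inr 0)) := fun h => by
    have := fD.map_rel_iff.mp h; simp [twoK2] at this
  have nad : ¬ G.Adj (fD (Sum.inl 0)) (fD (Sum.inr 1)) := fun h => by
    have := fD.map_rel_iff.mp h; simp [twoK2] at this
  have nbc : ¬ G.Adj (fD (Sum.inl 1)) (fD (Sum.inr 0)) := fun h => by
    have := fD.map_rel_iff.mp h; simp [twoK2] at this
  have nbd : ¬ G.Adj (fD (Sum.inl 1)) (fD (Sum.inr 1)) := fun h => by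
    have := fD.map_rel_iff.mp h; simp [twoK2] at this
  by_cases hre : G.Reachable (fD (Sum.inl 0)) (fD (Sum.inr 0))
  · exact Or.inr (Or.inl (butterfly_case hcog hab hcd nac nad nbc nbd hre))
  · rcases lemM huv hvw huw huwne hxy hxz hyz with
      ⟨h, s, m, n, c1, c2, c3, c4, c5, c6⟩ | ⟨h, b', s, t, c1, c2, c3, c4, c5, c6, c7⟩ | hP
    · -- paw with hub h
      obtain ⟨p, q, hpq, key⟩ := far_edge hre hab hcd h
      obtain ⟨k1, k2, k3, k4⟩ := key h (Reachable.refl h)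
      obtain ⟨l1, l2, l3, l4⟩ := key s c1.reachable
      obtain ⟨o1, o2, o3, o4⟩ := key m c2.reachable
      obtain ⟨r1, r2, r3, r4⟩ := key n c3.reachable
      exact Or.inr (Or.inr (Or.inl (contains_K2paw_of hpq c1 c2 c3 c4 c5 c6
        k1 l1 o1 r1 k2 l2 o2 r2 k3 l3 o3 r3 k4 l4 o4 r4)))
    · -- diamond with hub h
      obtain ⟨p, q, hpq, key⟩ := far_edge hre hab hcd h
      obtain ⟨k1, k2, k3, k4⟩ := key h (Reachable.refl h)
      obtain ⟨l1, l2, l3, l4⟩ := key b' c1.reachable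
      obtain ⟨o1, o2, o3, o4⟩ := key s c2.reachable
      obtain ⟨r1, r2, r3, r4⟩ := key t c3.reachable
      exact Or.inr (Or.inr (Or.inr (contains_K2dia_of hpq c1 c2 c3 c4 c5 c6 c7
        k1 l1 o1 r1 k2 l2 o2 r2 k3 l3 o3 r3 k4 l4 o4 r4)))
    · exact Or.inl hP
end
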